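/- For any density matrix ρ on a d-dimensional Hilbert space with purity γ = Tr(ρ²), the von Neumann entropy satisfies S(ρ) ≤ -x₁ log x₁ - (1 - x₁) log((1-x₁)/(d-1)), where x₁ = 1/d + √((d-1)/d · (γ - 1/d)). -/

import Mathlib

open scoped ComplexOrder

/-- Von Neumann entropy of a matrix: the Shannon entropy of its eigenvalue vector
(junk value 0 if the matrix is not Hermitian). -/
noncomputable def vonNeumannEntropy {n : Type*} [Fintype n] [DecidableEq n]
    (A : Matrix n n ℂ) : ℝ :=
  if h : A.IsHermitian then -∑ i, h.eigenvalues i * Real.log (h.eigenvalues i) else 0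

section Aux

open Real Set


/-- Tangent line bound for the concave function `t ↦ -(t log t)` at `y > 0`. -/
lemma tangent_bound {y t : ℝ} (hy : 0 < y) (ht : 0 ≤ t) :
    -(t * Real.log t) ≤ -(y * Real.log y) - (Real.log y + 1) * (t - y) := by
  rcases ht.eq_or_lt with h | h
  · subst h
    simp only [Real.log_zero, mul_zero, zero_mul, neg_zero, zero_sub]
    nlinarith
  · have h1 : Real.log (y / t) ≤ y / t - 1 := Real.log_le_sub_one_of_pos (div_pos hy h)
    rw [Real.log_div hy.ne' h.ne'] at h1
    have h2 : t * (y / t) = y := by field_simp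
    nlinarith [mul_le_mul_of_nonneg_left h1 h.le]


/-- Concave function vanishing at two points `y < ξ` of `Ioi 0`:
nonneg between them, nonpos outside. -/
lemma concave_sign {φ : ℝ → ℝ} {y ξ : ℝ} (hφ : ConcaveOn ℝ (Ioi 0) φ)
    (hy : 0 < y) (hyξ : y < ξ) (h0y : φ y = 0) (h0ξ : φ ξ = 0) :
    (∀ t, 0 < t → t ≤ y → φ t ≤ 0) ∧ (∀ t, y ≤ t → t ≤ ξ → 0 ≤ φ t) ∧
      (∀ t, ξ ≤ t → φ t ≤ 0) := by
  have hξ : (0:ℝ) < ξ := hy.trans hyξ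
  refine ⟨fun t ht hty => ?_, fun t hyt htξ => ?_, fun t hξt => ?_⟩
  · have hne : 0 < ξ - t := by linarith
    have key : ((ξ - y)/(ξ - t)) • φ t + ((y - t)/(ξ - t)) • φ ξ ≤
        φ (((ξ - y)/(ξ - t)) • t + ((y - t)/(ξ - t)) • ξ) :=
      hφ.2 (mem_Ioi.2 ht) (mem_Ioi.2 hξ) (by apply div_nonneg <;> linarith) (by apply div_nonneg <;> linarith) (by field_simp; ring)
    have hcomb : ((ξ - y)/(ξ - t)) • t + ((y - t)/(ξ - t)) • ξ = y := by
      simp only [smul_eq_mul]; field_simp; ring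
    rw [hcomb, h0y, smul_eq_mul, smul_eq_mul, h0ξ] at key
    nlinarith [div_pos (show (0:ℝ) < ξ - y by linarith) hne]
  · have hne : 0 < ξ - y := by linarith
    have key : ((ξ - t)/(ξ - y)) • φ y + ((t - y)/(ξ - y)) • φ ξ ≤
        φ (((ξ - t)/(ξ - y)) • y + ((t - y)/(ξ - y)) • ξ) :=
      hφ.2 (mem_Ioi.2 hy) (mem_Ioi.2 hξ) (by apply div_nonneg <;> linarith) (by apply div_nonneg <;> linarith) (by field_simp; ring)
    have hcomb : ((ξ - t)/(ξ - y)) • y + ((t - y)/(ξ - y)) • ξ = t := by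
      simp only [smul_eq_mul]; field_simp; ring
    rw [hcomb, h0y, h0ξ, smul_eq_mul, smul_eq_mul] at key
    nlinarith
  · have hne : 0 < t - y := by linarith
    have ht : (0:ℝ) < t := hy.trans_le (by linarith)
    have key : ((t - ξ)/(t - y)) • φ y + ((ξ - y)/(t - y)) • φ t ≤
        φ (((t - ξ)/(t - y)) • y + ((ξ - y)/(t - y)) • t) :=
      hφ.2 (mem_Ioi.2 hy) (mem_Ioi.2 ht) (by apply div_nonneg <;> linarith) (by apply div_nonneg <;> linarith) (by field_simp; ring)
    have hcomb : ((t - ξ)/(t - y)) • y + ((ξ - y)/(t - y)) • t = ξ := by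
      simp only [smul_eq_mul]; field_simp; ring
    rw [hcomb, h0y, h0ξ, smul_eq_mul, smul_eq_mul] at key
    nlinarith [div_pos (show (0:ℝ) < ξ - y by linarith) hne]


lemma affine_concave (k m : ℝ) : ConcaveOn ℝ (Ioi 0) (fun t : ℝ => k * t + m) := by
  refine ⟨convex_Ioi 0, fun u _ v _ a b ha hb hab => le_of_eq ?_⟩
  simp only [smul_eq_mul]
  linear_combination m * hab


/-- Quadratic majorant: if the parabola `q(t) = -(y log y) - (log y + 1)(t-y) + c(t-y)²`
agrees with `-(t log t)` at `x > y > 0`, then it dominates it on `[0, x]`. -/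
lemma quad_bound {y x c : ℝ} (hy : 0 < y) (hyx : y < x)
    (hc : -(x * Real.log x) = -(y * Real.log y) - (Real.log y + 1) * (x - y) + c * (x - y) ^ 2)
    {t : ℝ} (ht0 : 0 ≤ t) (htx : t ≤ x) :
    -(t * Real.log t) ≤ -(y * Real.log y) - (Real.log y + 1) * (t - y) + c * (t - y) ^ 2 := by
  set h : ℝ → ℝ := fun t => -(y * Real.log y) - (Real.log y + 1) * (t - y) + c * (t - y) ^ 2
    + t * Real.log t with hh
  set φ : ℝ → ℝ := fun t => Real.log t - Real.log y + 2 * c * (t - y) with hφdef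
  have hcont : Continuous h := by
    apply Continuous.add
    · fun_prop
    · exact Real.continuous_mul_log
  have hd : ∀ s : ℝ, 0 < s → HasDerivAt h (φ s) s := by
    intro s hs
    have h1 : HasDerivAt (fun t : ℝ => t - y) 1 s := (hasDerivAt_id s).sub_const y
    have h2 : HasDerivAt (fun t : ℝ => (Real.log y + 1) * (t - y)) (Real.log y + 1) s := by
      simpa using h1.const_mul (Real.log y + 1)
    have h3 : HasDerivAt (fun t : ℝ => (t - y) ^ 2) (2 * (s - y)) s := by
      simpa using h1.fun_pow 2
    have h4 : HasDerivAt (fun t : ℝ => c * (t - y) ^ 2) (c * (2 * (s - y))) s := h3.const_mul c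
    have h5 := Real.hasDerivAt_mul_log hs.ne'
    have h6 := (((hasDerivAt_const s (-(y * Real.log y))).fun_sub h2).fun_add h4).fun_add h5
    exact h6.congr_deriv (by simp only [φ]; ring)
  have hy0 : h y = 0 := by simp [hh]
  have hx0 : h x = 0 := by simp only [hh]; linarith [hc]
  obtain ⟨ξ, hξmem, hξ0⟩ := exists_deriv_eq_zero hyx hcont.continuousOn (by rw [hy0, hx0])
  have hξpos : 0 < ξ := hy.trans hξmem.1
  have φξ : φ ξ = 0 := by rw [← (hd ξ hξpos).deriv]; exact hξ0
  have φy : φ y = 0 := by simp [hφdef]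
  have hφconc : ConcaveOn ℝ (Ioi 0) φ := by
    have heq : φ = fun t => Real.log t + (2 * c * t + (-Real.log y - 2 * c * y)) := by
      funext t; simp only [hφdef]; ring
    rw [heq]
    exact strictConcaveOn_log_Ioi.concaveOn.add (affine_concave (2 * c) _)
  obtain ⟨s1, s2, s3⟩ := concave_sign hφconc hy hξmem.1 φy φξ
  have A1 : AntitoneOn h (Icc 0 y) := by
    apply antitoneOn_of_hasDerivWithinAt_nonpos (convex_Icc 0 y) hcont.continuousOn
      (f' := φ) <;> intro s hs <;> rw [interior_Icc] at hs
    · exact (hd s hs.1).hasDerivWithinAt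
    · exact s1 s hs.1 hs.2.le
  have M : MonotoneOn h (Icc y ξ) := by
    apply monotoneOn_of_hasDerivWithinAt_nonneg (convex_Icc y ξ) hcont.continuousOn
      (f' := φ) <;> intro s hs <;> rw [interior_Icc] at hs
    · exact (hd s (hy.trans hs.1)).hasDerivWithinAt
    · exact s2 s hs.1.le hs.2.le
  have A2 : AntitoneOn h (Icc ξ x) := by
    apply antitoneOn_of_hasDerivWithinAt_nonpos (convex_Icc ξ x) hcont.continuousOn
      (f' := φ) <;> intro s hs <;> rw [interior_Icc] at hs
    · exact (hd s (hξpos.trans hs.1)).hasDerivWithinAt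
    · exact s3 s hs.1.le
  have key : 0 ≤ h t := by
    rcases le_total t y with h1 | h1
    · have := A1 ⟨ht0, h1⟩ ⟨hy.le, le_refl y⟩ h1
      rwa [hy0] at this
    · rcases le_total t ξ with h2 | h2
      · have := M ⟨le_refl y, hξmem.1.le⟩ ⟨h1, h2⟩ h1
        rwa [hy0] at this
      · have := A2 ⟨h2, htx⟩ ⟨hξmem.2.le, le_refl x⟩ htx
        rwa [hx0] at this
  simp only [hh] at key
  linarith


/-- `F u = -(u log u) - (1-u) log(1-u) + (1-u) log(D-1)` is antitone on `[1/D, 1]`. -/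
lemma F_anti {D : ℝ} (hD : 1 < D) :
    AntitoneOn (fun u : ℝ => -(u * Real.log u) - (1 - u) * Real.log (1 - u)
      + (1 - u) * Real.log (D - 1)) (Icc (1/D) 1) := by
  have hcont : Continuous (fun u : ℝ => -(u * Real.log u) - (1 - u) * Real.log (1 - u)
      + (1 - u) * Real.log (D - 1)) := by
    have h1 : Continuous fun u : ℝ => (1 - u) * Real.log (1 - u) :=
      Real.continuous_mul_log.comp (continuous_const.sub continuous_id)
    exact ((Real.continuous_mul_log.neg).sub h1).add (by fun_prop)
  apply antitoneOn_of_hasDerivWithinAt_nonpos (convex_Icc _ _) hcont.continuousOn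
    (f' := fun u => Real.log (1 - u) - Real.log u - Real.log (D - 1)) <;>
    intro u hu <;> rw [interior_Icc] at hu
  · have hu0 : 0 < u := lt_trans (by positivity) hu.1
    have hu1 : u < 1 := hu.2
    have h1 : HasDerivAt (fun u : ℝ => u * Real.log u) (Real.log u + 1) u :=
      Real.hasDerivAt_mul_log hu0.ne'
    have h2 : HasDerivAt (fun u : ℝ => (1 - u) * Real.log (1 - u))
        ((Real.log (1 - u) + 1) * (-1)) u := by
      have hs : HasDerivAt (fun u : ℝ => 1 - u) (-1) u := by
        simpa using (hasDerivAt_const u (1:ℝ)).fun_sub (hasDerivAt_id' u)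
      simpa [Function.comp_def] using (Real.hasDerivAt_mul_log (by linarith : (1:ℝ) - u ≠ 0)).comp u hs
    have h3 : HasDerivAt (fun u : ℝ => (1 - u) * Real.log (D - 1)) (-Real.log (D - 1)) u := by
      simpa using ((hasDerivAt_const u (1:ℝ)).sub (hasDerivAt_id u)).mul_const (Real.log (D - 1))
    have := (h1.fun_neg.fun_sub h2).fun_add h3
    exact (this.congr_deriv (by ring)).hasDerivWithinAt
  · have hu0 : 0 < u := lt_trans (by positivity) hu.1
    have h1 : Real.log (1 - u) ≤ Real.log (u * (D - 1)) := by
      apply Real.log_le_log (by linarith [hu.2])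
      have h2 : 1 < u * D := by
        have := (div_lt_iff₀ (by linarith : (0:ℝ) < D)).mp hu.1
        linarith
      nlinarith
    rw [Real.log_mul hu0.ne' (by linarith : D - 1 ≠ 0)] at h1
    linarith

set_option maxHeartbeats 2000000 in
/-- Entropy–purity bound on the probability simplex, `d ≥ 2`. -/
lemma simplex_entropy_le (d : ℕ) (hd : 2 ≤ d) (p : Fin d → ℝ) (hp0 : ∀ i, 0 ≤ p i)
    (hsum : ∑ i, p i = 1) (γ : ℝ) (hγ : ∑ i, p i ^ 2 = γ) :
    -∑ i, p i * Real.log (p i) ≤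
      -((1/(d:ℝ) + Real.sqrt (((d:ℝ) - 1)/(d:ℝ) * (γ - 1/(d:ℝ)))) *
          Real.log (1/(d:ℝ) + Real.sqrt (((d:ℝ) - 1)/(d:ℝ) * (γ - 1/(d:ℝ)))))
        - (1 - (1/(d:ℝ) + Real.sqrt (((d:ℝ) - 1)/(d:ℝ) * (γ - 1/(d:ℝ))))) *
          Real.log ((1 - (1/(d:ℝ) + Real.sqrt (((d:ℝ) - 1)/(d:ℝ) * (γ - 1/(d:ℝ)))))/((d:ℝ) - 1)) := by
  set D : ℝ := (d : ℝ) with hDdef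
  have hD2 : (2:ℝ) ≤ D := by simp only [hDdef]; exact_mod_cast hd
  have hD1 : (1:ℝ) < D := by linarith
  have hD0 : (0:ℝ) < D := by linarith
  have hDne : D ≠ 0 := hD0.ne'
  have hD1ne : D - 1 ≠ 0 := by linarith
  have hinv : D * D⁻¹ = 1 := mul_inv_cancel₀ hDne
  have hK : (D - 1) * (D - 1)⁻¹ = 1 := mul_inv_cancel₀ hD1ne
  -- basic facts
  have hp1 : ∀ i, p i ≤ 1 := by
    intro i
    rw [← hsum]
    exact Finset.single_le_sum (fun j _ => hp0 j) (Finset.mem_univ i)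
  have hγ1 : γ ≤ 1 := by
    rw [← hγ, ← hsum]
    exact Finset.sum_le_sum fun i _ => by nlinarith [hp0 i, hp1 i]
  have hγd : 1/D ≤ γ := by
    have h1 := sq_sum_le_card_mul_sum_sq (s := (Finset.univ : Finset (Fin d))) (f := p)
    rw [hsum, hγ, Finset.card_univ, Fintype.card_fin] at h1
    rw [div_le_iff₀ hD0]
    nlinarith
  have harg : 0 ≤ (D - 1)/D * (γ - 1/D) := by
    apply mul_nonneg (div_nonneg (by linarith) hD0.le) (by linarith)
  set s : ℝ := Real.sqrt ((D - 1)/D * (γ - 1/D)) with hsdef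
  have hs0 : 0 ≤ s := Real.sqrt_nonneg _
  have hs2 : s ^ 2 = (D - 1)/D * (γ - 1/D) := Real.sq_sqrt harg
  set x : ℝ := 1/D + s with hxdef
  have hxd : 1/D ≤ x := by simp only [hxdef]; linarith
  have hx0 : 0 < x := lt_of_lt_of_le (by positivity) hxd
  have hio : 1 - 1/D = (D - 1)/D := by field_simp [hDne, hD1ne]
  have hx1 : x ≤ 1 := by
    have hdd : 0 ≤ (D - 1)/D := div_nonneg (by linarith) hD0.le
    have h3 : γ - 1/D ≤ (D - 1)/D := by rw [← hio]; linarith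
    have h2 : s ^ 2 ≤ ((D - 1)/D) ^ 2 := by rw [hs2]; nlinarith
    have h1 : s ≤ (D - 1)/D := by nlinarith
    simp only [hxdef]; linarith
  have lhs_eq : -∑ i, p i * Real.log (p i) = ∑ i, -(p i * Real.log (p i)) := by
    rw [Finset.sum_neg_distrib]
  rcases hx1.lt_or_eq with hxlt | hxeq
  · -- x < 1
    set y : ℝ := (1 - x)/(D - 1) with hydef
    have hy0 : 0 < y := div_pos (by linarith) (by linarith)
    have hlin : x + (D - 1)*y = 1 := by
      simp only [hydef]
      linear_combination (1 - x)*hK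
    have h3 : (D - 1)*y = 1 - x := by linarith
    have hkey : (D - 1)*x^2 + (1 - x)^2 = (D - 1)*γ := by
      simp only [hxdef]
      linear_combination D*hs2 + (2*s + (D - 1)*γ + (2 - D)*D⁻¹ - 1)*hinv
    have hsq : x^2 + (D - 1)*y^2 = γ := by
      have h4 : (D - 1)*((D - 1)*y^2) = (1 - x)^2 := by
        linear_combination ((D - 1)*y + (1 - x)) * h3
      have h5 : (D - 1)*(x^2 + (D - 1)*y^2) = (D - 1)*γ := by linear_combination hkey + h4
      exact mul_left_cancel₀ (by linarith : D - 1 ≠ 0) h5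
    by_cases hall : ∀ i, p i ≤ x
    · -- all entries below x : quadratic (or tangent) majorant
      have hxy : x - y = D*s/(D - 1) := by
        simp only [hydef, hxdef]; field_simp [hDne, hD1ne]; ring
      rcases eq_or_lt_of_le hs0 with hs | hs
      · -- s = 0, so x = y = 1/D : tangent line
        have hx' : x = 1/D := by rw [hxdef, ← hs, add_zero]
        have hyx : y = x := by
          rw [hydef, hx']
          linear_combination D⁻¹*hK - (D - 1)⁻¹*hinv
        have hDy : D*y = 1 := by
          rw [hyx, hx']
          field_simp [hDne]
        have main : ∑ i, -(p i * Real.log (p i)) ≤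
            ∑ i, (-(y*Real.log y) - (Real.log y + 1)*(p i - y)) :=
          Finset.sum_le_sum fun i _ => tangent_bound hy0 (hp0 i)
        have expand : ∑ i, (-(y*Real.log y) - (Real.log y + 1)*(p i - y))
            = D*(-(y*Real.log y) + (Real.log y + 1)*y) + (-(Real.log y + 1))*1 := by
          have hterm : ∀ i : Fin d, -(y*Real.log y) - (Real.log y + 1)*(p i - y)
              = (-(y*Real.log y) + (Real.log y + 1)*y) + (-(Real.log y + 1))*(p i) := fun i => by
            ring
          simp only [hterm]
          rw [Finset.sum_add_distrib, Finset.sum_const, ← Finset.mul_sum, hsum,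
            Finset.card_univ, Fintype.card_fin, nsmul_eq_mul]
        have final : D*(-(y*Real.log y) + (Real.log y + 1)*y) + (-(Real.log y + 1))*1
            = -(x*Real.log x) - ((D - 1)*y)*Real.log y := by
          rw [hyx] at hDy ⊢
          linear_combination (1 + Real.log x)*hDy
        rw [← h3]
        rw [expand] at main
        linarith [main, final, lhs_eq]
      · -- 0 < s : genuine quadratic
        have hyx : y < x := by
          have h0 : 0 < D*s/(D - 1) := div_pos (mul_pos hD0 hs) (by linarith)
          rw [← hxy] at h0
          linarith
        set c : ℝ := (-(x*Real.log x) + y*Real.log y + (Real.log y + 1)*(x - y)) / (x - y)^2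
          with hcdef
        have hc : -(x * Real.log x)
            = -(y*Real.log y) - (Real.log y + 1)*(x - y) + c*(x - y)^2 := by
          simp only [hcdef]
          field_simp [hDne, hD1ne, sub_ne_zero.mpr hyx.ne']
          ring
        have main : ∑ i, -(p i * Real.log (p i)) ≤
            ∑ i, (-(y*Real.log y) - (Real.log y + 1)*(p i - y) + c*(p i - y)^2) :=
          Finset.sum_le_sum fun i _ => quad_bound hy0 hyx hc (hp0 i) (hall i)
        have expand : ∑ i, (-(y*Real.log y) - (Real.log y + 1)*(p i - y) + c*(p i - y)^2)
            = D*(-(y*Real.log y) + (Real.log y + 1)*y + c*y^2)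
              + (-(Real.log y + 1) - 2*c*y)*1 + c*γ := by
          have hterm : ∀ i : Fin d, -(y*Real.log y) - (Real.log y + 1)*(p i - y) + c*(p i - y)^2
              = (-(y*Real.log y) + (Real.log y + 1)*y + c*y^2)
                + (-(Real.log y + 1) - 2*c*y)*(p i) + c*(p i)^2 := fun i => by ring
          simp only [hterm]
          rw [Finset.sum_add_distrib, Finset.sum_add_distrib, Finset.sum_const,
            ← Finset.mul_sum, ← Finset.mul_sum, hsum, hγ,
            Finset.card_univ, Fintype.card_fin, nsmul_eq_mul]
        have id1 : 1 - D*y = x - y := by linear_combination -hlin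
        have id2 : γ - 2*y + D*y^2 = (x - y)^2 := by linear_combination -hsq + 2*y*hlin
        have final : D*(-(y*Real.log y) + (Real.log y + 1)*y + c*y^2)
              + (-(Real.log y + 1) - 2*c*y)*1 + c*γ
            = -(x*Real.log x) - ((D - 1)*y)*Real.log y := by
          linear_combination -hc - (Real.log y + 1)*id1 + c*id2
        rw [← h3]
        rw [expand] at main
        linarith [main, final, lhs_eq]
    · -- some entry exceeds x
      push_neg at hall
      obtain ⟨i0, hi0⟩ := hall
      set m : ℝ := p i0 with hmdef
      have hm1 : m ≤ 1 := hp1 i0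
      have hrest : ∑ j ∈ Finset.univ.erase i0, p j = 1 - m := by
        have := Finset.add_sum_erase Finset.univ p (Finset.mem_univ i0)
        simp only [← hmdef] at this ⊢
        linarith
      have hcast : ((Finset.univ.erase i0).card : ℝ) = D - 1 := by
        rw [Finset.card_erase_of_mem (Finset.mem_univ i0), Finset.card_univ, Fintype.card_fin]
        have h1 : (1:ℕ) ≤ d := by omega
        rw [Nat.cast_sub h1, Nat.cast_one, hDdef]
      have hsplit : ∑ i, -(p i * Real.log (p i))
          = -(m * Real.log m) + ∑ j ∈ Finset.univ.erase i0, -(p j * Real.log (p j)) :=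
        (Finset.add_sum_erase Finset.univ (fun j => -(p j * Real.log (p j)))
          (Finset.mem_univ i0)).symm
      have hFm : -∑ i, p i * Real.log (p i) ≤
          -(m*Real.log m) - (1 - m)*Real.log (1 - m) + (1 - m)*Real.log (D - 1) := by
        rcases hm1.lt_or_eq with hm | hm
        · -- m < 1
          have hσ : 0 < 1 - m := by linarith
          set y0 : ℝ := (1 - m)/(D - 1) with hy0def
          have hy00 : 0 < y0 := div_pos hσ (by linarith)
          have hDy0 : (D - 1)*y0 = 1 - m := by simp only [hy0def]; field_simp [hDne, hD1ne]
          have hb : ∑ j ∈ Finset.univ.erase i0, -(p j * Real.log (p j)) ≤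
              ∑ j ∈ Finset.univ.erase i0, (-(y0*Real.log y0) - (Real.log y0 + 1)*(p j - y0)) :=
            Finset.sum_le_sum fun j _ => tangent_bound hy00 (hp0 j)
          have hexp : ∑ j ∈ Finset.univ.erase i0,
                (-(y0*Real.log y0) - (Real.log y0 + 1)*(p j - y0))
              = (D - 1)*(-(y0*Real.log y0) + (Real.log y0 + 1)*y0)
                + (-(Real.log y0 + 1))*(1 - m) := by
            have hterm : ∀ j : Fin d, -(y0*Real.log y0) - (Real.log y0 + 1)*(p j - y0)
                = (-(y0*Real.log y0) + (Real.log y0 + 1)*y0)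
                  + (-(Real.log y0 + 1))*(p j) := fun j => by ring
            simp only [hterm]
            rw [Finset.sum_add_distrib, Finset.sum_const, ← Finset.mul_sum, hrest,
              nsmul_eq_mul, hcast]
          have hlog : Real.log y0 = Real.log (1 - m) - Real.log (D - 1) := by
            rw [hy0def, Real.log_div hσ.ne' (by linarith : D - 1 ≠ 0)]
          rw [lhs_eq, hsplit]
          have : (D - 1)*(-(y0*Real.log y0) + (Real.log y0 + 1)*y0)
                + (-(Real.log y0 + 1))*(1 - m)
              = -(1 - m)*Real.log (1 - m) + (1 - m)*Real.log (D - 1) := by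
            rw [hlog]
            linear_combination hDy0
          rw [hexp] at hb
          linarith [hb]
        · -- m = 1 : all other entries vanish
          have hz : ∀ j ∈ Finset.univ.erase i0, p j = 0 := by
            apply (Finset.sum_eq_zero_iff_of_nonneg (fun j _ => hp0 j)).mp
            rw [hrest, hm]; norm_num
          have hzero : ∑ j ∈ Finset.univ.erase i0, -(p j * Real.log (p j)) = 0 :=
            Finset.sum_eq_zero fun j hj => by rw [hz j hj]; simp
          rw [lhs_eq, hsplit, hzero, hm]
          simp
      have hanti := F_anti hD1
      have hFmx : -(m*Real.log m) - (1 - m)*Real.log (1 - m) + (1 - m)*Real.log (D - 1)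
          ≤ -(x*Real.log x) - (1 - x)*Real.log (1 - x) + (1 - x)*Real.log (D - 1) := by
        have hmem1 : x ∈ Icc (1/D) 1 := ⟨hxd, hx1⟩
        have hmem2 : m ∈ Icc (1/D) 1 := ⟨le_trans hxd hi0.le, hm1⟩
        exact hanti hmem1 hmem2 hi0.le
      have hlogx : Real.log y = Real.log (1 - x) - Real.log (D - 1) := by
        rw [hydef, Real.log_div (by linarith : (1:ℝ) - x ≠ 0) (by linarith : D - 1 ≠ 0)]
      have : -(x*Real.log x) - (1 - x)*Real.log (1 - x) + (1 - x)*Real.log (D - 1)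
          = -(x*Real.log x) - (1 - x)*Real.log y := by
        rw [hlogx]; ring
      linarith [hFm, hFmx]
  · -- x = 1 : purity is 1, all mass on one entry
    have hse : s = (D - 1)/D := by
      rw [← hio]; simp only [hxdef] at hxeq; linarith
    have hγe : γ = 1 := by
      have h2 := hs2
      rw [hse] at h2
      by_contra h
      have hlt : γ < 1 := lt_of_le_of_ne hγ1 h
      have hd1 : (0:ℝ) < (D-1)/D := div_pos (by linarith) hD0
      nlinarith [h2, hd1]
    have hzo : ∀ i, p i * Real.log (p i) = 0 := by
      have hsz : ∑ i, (p i - p i^2) = 0 := by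
        rw [Finset.sum_sub_distrib, hsum, hγ, hγe]; ring
      have hterm := (Finset.sum_eq_zero_iff_of_nonneg
        (fun i _ => by nlinarith [hp0 i, hp1 i] : ∀ i ∈ Finset.univ, 0 ≤ p i - p i^2)).mp hsz
      intro i
      have hi := hterm i (Finset.mem_univ i)
      have : p i * (1 - p i) = 0 := by nlinarith [hi]
      rcases mul_eq_zero.mp this with h | h
      · rw [h]; simp
      · have : p i = 1 := by linarith
        rw [this]; simp
    have hLHS : ∑ i, p i * Real.log (p i) = 0 := Finset.sum_eq_zero fun i _ => hzo i
    rw [hLHS, hxeq]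
    simp

end Aux

open Real Set in
/-- For a density matrix ρ on a d-dimensional space with purity γ = Tr(ρ²),
`S(ρ) ≤ -x₁ log x₁ - (1-x₁) log((1-x₁)/(d-1))` with `x₁ = 1/d + √((d-1)/d (γ-1/d))`. -/
theorem vonNeumannEntropy_le_of_purity (d : ℕ) (ρ : Matrix (Fin d) (Fin d) ℂ)
    (hρ : ρ.PosSemidef) (htr : ρ.trace = 1) (γ : ℝ) (hγ : (ρ * ρ).trace = (γ : ℂ)) :
    let x₁ : ℝ := 1 / d + Real.sqrt ((d - 1) / d * (γ - 1 / d))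
    vonNeumannEntropy ρ ≤ -(x₁ * Real.log x₁) - (1 - x₁) * Real.log ((1 - x₁) / (d - 1)) := by
  intro x₁
  have hH : ρ.IsHermitian := hρ.1
  rw [vonNeumannEntropy, dif_pos hH]
  set E : Fin d → ℝ := hH.eigenvalues with hEdef
  have hE0 : ∀ i, 0 ≤ E i := fun i => hρ.eigenvalues_nonneg i
  set U : Matrix (Fin d) (Fin d) ℂ := (hH.eigenvectorUnitary : Matrix (Fin d) (Fin d) ℂ)
    with hUdef
  have hUU : star U * U = 1 := Unitary.coe_star_mul_self hH.eigenvectorUnitary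
  set Dg : Matrix (Fin d) (Fin d) ℂ :=
    Matrix.diagonal (RCLike.ofReal ∘ E) with hDgdef
  have hspec : ρ = U * Dg * star U := hH.spectral_theorem
  have h1 : ρ.trace = ∑ i, (E i : ℂ) := by
    conv_lhs => rw [hspec]
    rw [Matrix.trace_mul_cycle, hUU, Matrix.one_mul, hDgdef, Matrix.trace_diagonal]
    simp
  have htr' : ∑ i, E i = 1 := by
    have h2 : ((∑ i, E i : ℝ) : ℂ) = 1 := by
      push_cast
      rw [← h1, htr]
    exact_mod_cast h2
  have h3 : (ρ * ρ).trace = ∑ i, ((E i : ℂ))^2 := by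
    conv_lhs => rw [hspec]
    have hmm : (U * Dg * star U) * (U * Dg * star U) = U * (Dg * Dg) * star U := by
      simp only [Matrix.mul_assoc]
      rw [show star U * (U * (Dg * star U)) = Dg * star U from by
        rw [← Matrix.mul_assoc, hUU, Matrix.one_mul]]
    rw [hmm, Matrix.trace_mul_cycle, hUU, Matrix.one_mul, hDgdef,
      Matrix.diagonal_mul_diagonal, Matrix.trace_diagonal]
    simp [pow_two]
  have htr2 : ∑ i, E i ^ 2 = γ := by
    have h4 : ((∑ i, E i ^ 2 : ℝ) : ℂ) = γ := by
      push_cast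
      rw [← h3, hγ]
    exact_mod_cast h4
  rcases Nat.lt_or_ge d 2 with hd | hd
  · have hd01 : d = 0 ∨ d = 1 := by omega
    rcases hd01 with hd0 | hd1
    · subst hd0
      simp at htr'
    · subst hd1
      have hE1 : E 0 = 1 := by simpa using htr'
      have hx : x₁ = 1 := by
        simp only [x₁]
        norm_num [Real.sqrt_zero]
      rw [hx]
      simp [Fin.sum_univ_one, hE1]
  · exact simplex_entropy_le d hd E hE0 htr' γ htr2
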